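/- Assume η > 0 and let λ₁, λ₂, λ₃ > 0 satisfy λ₂ ≥ λ₃·η. Let β, γ ∈ M(coord). (a) If γ' ∈ M(coord) with ⟦γ'⟧ ≥ 1 and n' ∈ ℕ^d with |n'| < η satisfy (z^{γ'}D^{(n')})_β^γ ≠ 0, then |β|_≺ > |γ|_≺. (b) If (∂_i)_β^γ ≠ 0 for some i ∈ {1,…,d}, then |β|_≺ > |γ|_≺. -/
import Mathlib


open scoped Classical

noncomputable section

/-- The set of `d`-tuples of natural numbers, `ℕ^d`. -/
abbrev Nd (d : ℕ) : Type := Fin d → ℕ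

/-- Multi-indices over `ℕ^d`: finitely supported functions `ℕ^d → ℕ`. -/
abbrev MNd (d : ℕ) : Type := Nd d →₀ ℕ

/-- The coordinate set `coord = (𝔏 × M(ℕ^d)) ⊔ ℕ^d`, where `𝔏 = 𝔏⁻ ∪ {0}` is
modelled as `Option Lm` (with `none` playing the role of the element `0`). -/
abbrev Coord (Lm : Type) (d : ℕ) : Type := (Option Lm × MNd d) ⊕ Nd d

/-- Multi-indices over `coord`. -/
abbrev MCoord (Lm : Type) (d : ℕ) : Type := Coord Lm d →₀ ℕ

variable {Lm : Type} {d : ℕ}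

/-- Length `ℓ(m)` of a multi-index. -/
def mlen {I : Type} (m : I →₀ ℕ) : ℕ := m.sum fun _ v => v

/-- The `i`-th unit vector of `ℕ^d`. -/
def unitNd (i : Fin d) : Nd d := Pi.single i 1

/-- The coefficient `(z^{γ'} D^{(n')})_β^γ`. -/
def coefZD (γ' : MCoord Lm d) (n' : Nd d) (β γ : MCoord Lm d) : ℝ :=
  (γ.sum fun x v =>
    match x with
    | Sum.inl (l, k) =>
        (v : ℝ) * ((k n' : ℝ) + 1) *
          (if β + Finsupp.single (Sum.inl (l, k)) 1 =
              γ + Finsupp.single (Sum.inl (l, k + Finsupp.single n' 1)) 1 + γ'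
           then 1 else 0)
    | Sum.inr _ => 0) +
  ((γ (Sum.inr n') : ℝ) *
    (if β + Finsupp.single (Sum.inr n') 1 = γ + γ' then 1 else 0))

/-- The coefficient `(D^{(n')})_β^γ`. -/
def coefD (n' : Nd d) (β γ : MCoord Lm d) : ℝ := coefZD 0 n' β γ

/-- The coefficient `(∂_i)_β^γ`. -/
def coefPartial (i : Fin d) (β γ : MCoord Lm d) : ℝ :=
  ∑ᶠ n : Nd d,
    ((n i : ℝ) + 1) * coefZD (Finsupp.single (Sum.inr (n + unitNd i)) 1) n β γ

/-- `[β]`. -/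
def brkt (β : MCoord Lm d) : ℤ :=
  β.sum fun x v =>
    match x with
    | Sum.inl (_, k) => (1 - (mlen k : ℤ)) * (v : ℤ)
    | Sum.inr _ => (v : ℤ)

/-- Noise homogeneity `⟦β⟧`. -/
def nh (β : MCoord Lm d) : ℕ :=
  β.sum fun x v =>
    match x with
    | Sum.inl (some _, _) => v
    | Sum.inl (none, _) => 0
    | Sum.inr _ => 0

/-- Scaled degree `|n|` of `n ∈ ℕ^d`. -/
def snorm (s : Fin d → ℝ) (n : Nd d) : ℝ := ∑ i, s i * (n i : ℝ)

/-- A subcritical pair `(l,k)`. -/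
def Subcritical {L : Type} (s : Fin d → ℝ) (η : ℝ) (reg : L → ℝ) (ν : ℝ)
    (l : L) (k : MNd d) : Prop :=
  ν < η + reg l ∧
  ∀ k' : MNd d, 0 < k' → k' ≤ k →
    ν < η + (k'.sum fun n v => (ν - snorm s n) * (v : ℝ)) ∧
    ν < η + reg l + (k'.sum fun n v => (ν - snorm s n) * (v : ℝ))

/-- A subcritical multi-index. -/
def SubcriticalM (s : Fin d → ℝ) (η : ℝ) (reg : Option Lm → ℝ) (ν : ℝ)
    (β : MCoord Lm d) : Prop :=
  ∀ (l : Option Lm) (k : MNd d), β (Sum.inl (l, k)) ≠ 0 → Subcritical s η reg ν l k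

/-- Homogeneity `|β|`. -/
def homg (s : Fin d → ℝ) (η : ℝ) (α : Option Lm → ℝ) (β : MCoord Lm d) : ℝ :=
  β.sum fun x v =>
    match x with
    | Sum.inl (l, k) =>
        (α l + k.sum fun n v' => (η - snorm s n) * (v' : ℝ)) * (v : ℝ)
    | Sum.inr n => (snorm s n - η) * (v : ℝ)

/-- The set `N_min`. -/
def Nmin (s : Fin d → ℝ) (η : ℝ) (reg : Option Lm → ℝ) (ν : ℝ) :
    Set (MCoord Lm d) :=
  {β | brkt β = 1 ∧ SubcriticalM s η reg ν β ∧
       ∀ n : Nd d, snorm s n < ν → β (Sum.inr n) = 0}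

/-- The set `N`. -/
def NSet (s : Fin d → ℝ) (η : ℝ) (reg : Option Lm → ℝ) (ν : ℝ) :
    Set (MCoord Lm d) :=
  {β | β ∈ Nmin s η reg ν ∧ 0 < nh β}

/-- The purely polynomial set `P = {e_n}`. -/
def PolySet : Set (MCoord Lm d) :=
  {β | ∃ n : Nd d, β = Finsupp.single (Sum.inr n) 1}

/-- `populated = P ∪ N`. -/
def Populated (s : Fin d → ℝ) (η : ℝ) (reg : Option Lm → ℝ) (ν : ℝ) :
    Set (MCoord Lm d) :=
  PolySet ∪ NSet s η reg ν

/-- The subcritical coefficient `(z^{γ'} D^{(n')})^{sc}_β^γ`. -/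
def coefZDsc (s : Fin d → ℝ) (η : ℝ) (reg : Option Lm → ℝ) (ν : ℝ)
    (γ' : MCoord Lm d) (n' : Nd d) (β γ : MCoord Lm d) : ℝ :=
  (γ.sum fun x v =>
    match x with
    | Sum.inl (l, k) =>
        if Subcritical s η reg ν l (k + Finsupp.single n' 1) then
          (v : ℝ) * ((k n' : ℝ) + 1) *
            (if β + Finsupp.single (Sum.inl (l, k)) 1 =
                γ + Finsupp.single (Sum.inl (l, k + Finsupp.single n' 1)) 1 + γ'
             then 1 else 0)
        else 0
    | Sum.inr _ => 0) +
  ((γ (Sum.inr n') : ℝ) *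
    (if β + Finsupp.single (Sum.inr n') 1 = γ + γ' then 1 else 0))

/-- The subcritical coefficient `(∂_i)^{sc}_β^γ`. -/
def coefPartialSc (s : Fin d → ℝ) (η : ℝ) (reg : Option Lm → ℝ) (ν : ℝ)
    (i : Fin d) (β γ : MCoord Lm d) : ℝ :=
  ∑ᶠ n : Nd d,
    ((n i : ℝ) + 1) *
      coefZDsc s η reg ν (Finsupp.single (Sum.inr (n + unitNd i)) 1) n β γ

/-- `⌊β⌋ := Σ_n |n|·β(n)`. -/
def polydeg (s : Fin d → ℝ) (β : MCoord Lm d) : ℝ :=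
  β.sum fun x v =>
    match x with
    | Sum.inl _ => 0
    | Sum.inr n => snorm s n * (v : ℝ)

/-- `Σ_n (|n| − ν)·β(n)`. -/
def polyexcess (s : Fin d → ℝ) (ν : ℝ) (β : MCoord Lm d) : ℝ :=
  β.sum fun x v =>
    match x with
    | Sum.inl _ => 0
    | Sum.inr n => (snorm s n - ν) * (v : ℝ)

/-- `|β|_≺ := λ₁·ℓ(β) + λ₂·⟦β⟧ + λ₃·⌊β⌋`. -/
def ordPrec (s : Fin d → ℝ) (lam1 lam2 lam3 : ℝ) (β : MCoord Lm d) : ℝ :=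
  lam1 * (mlen β : ℝ) + lam2 * (nh β : ℝ) + lam3 * polydeg s β

lemma mlen_add {I : Type} (a b : I →₀ ℕ) : mlen (a + b) = mlen a + mlen b := by
  unfold mlen
  exact Finsupp.sum_add_index' (fun _ => rfl) (fun _ _ _ => rfl)

lemma mlen_single {I : Type} (x : I) : mlen (Finsupp.single x 1) = 1 := by
  unfold mlen
  simp [Finsupp.sum_single_index]

lemma nh_add (a b : MCoord Lm d) : nh (a + b) = nh a + nh b := by
  unfold nh
  apply Finsupp.sum_add_index'
  · rintro (⟨l | l, k⟩ | n) <;> rfl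
  · rintro (⟨l | l, k⟩ | n) v w <;> rfl

/-- helper value of nh on an `inl` single -/
def nhl (l : Option Lm) : ℕ := match l with | some _ => 1 | none => 0

lemma nh_single_inl (l : Option Lm) (k : MNd d) :
    nh (Finsupp.single (Sum.inl (l, k)) 1 : MCoord Lm d) = nhl l := by
  unfold nh
  rw [Finsupp.sum_single_index]
  · cases l <;> rfl
  · cases l <;> rfl

lemma nh_single_inr (n : Nd d) :
    nh (Finsupp.single (Sum.inr n) 1 : MCoord Lm d) = 0 := by
  unfold nh
  rw [Finsupp.sum_single_index] <;> rfl

lemma polydeg_add (s : Fin d → ℝ) (a b : MCoord Lm d) :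
    polydeg s (a + b) = polydeg s a + polydeg s b := by
  unfold polydeg
  apply Finsupp.sum_add_index'
  · rintro (⟨l, k⟩ | n) <;> simp
  · rintro (⟨l, k⟩ | n) v w <;> push_cast <;> ring

lemma polydeg_single_inl (s : Fin d → ℝ) (l : Option Lm) (k : MNd d) :
    polydeg s (Finsupp.single (Sum.inl (l, k)) 1 : MCoord Lm d) = 0 := by
  unfold polydeg
  rw [Finsupp.sum_single_index] <;> rfl

lemma polydeg_single_inr (s : Fin d → ℝ) (n : Nd d) :
    polydeg s (Finsupp.single (Sum.inr n) 1 : MCoord Lm d) = snorm s n := by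
  unfold polydeg
  rw [Finsupp.sum_single_index] <;> simp

lemma snorm_nonneg {s : Fin d → ℝ} (hs : ∀ i, 1 ≤ s i) (n : Nd d) :
    0 ≤ snorm s n := by
  apply Finset.sum_nonneg
  intro i _
  have := hs i
  positivity

lemma snorm_add (s : Fin d → ℝ) (a b : Nd d) :
    snorm s (a + b) = snorm s a + snorm s b := by
  unfold snorm
  rw [← Finset.sum_add_distrib]
  apply Finset.sum_congr rfl
  intro i _
  push_cast [Pi.add_apply]
  ring

lemma snorm_unit (s : Fin d → ℝ) (i : Fin d) : snorm s (unitNd i) = s i := by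
  unfold snorm unitNd
  rw [Finset.sum_eq_single i]
  · simp
  · intro j _ hj
    simp [Pi.single_apply, hj]
  · simp

lemma polydeg_nonneg {s : Fin d → ℝ} (hs : ∀ i, 1 ≤ s i) (β : MCoord Lm d) :
    0 ≤ polydeg s β := by
  apply Finset.sum_nonneg
  rintro (⟨l, k⟩ | n) _
  · exact le_refl 0
  · exact mul_nonneg (snorm_nonneg hs n) (by positivity)

lemma nh_le_mlen (β : MCoord Lm d) : nh β ≤ mlen β := by
  apply Finset.sum_le_sum
  rintro (⟨l | l, k⟩ | n) _ <;> simp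

lemma coefZD_cases {γ' : MCoord Lm d} {n' : Nd d} {β γ : MCoord Lm d}
    (h : coefZD γ' n' β γ ≠ 0) :
    (∃ l k, β + Finsupp.single (Sum.inl (l, k)) 1 =
        γ + Finsupp.single (Sum.inl (l, k + Finsupp.single n' 1)) 1 + γ') ∨
    (β + Finsupp.single (Sum.inr n') 1 = γ + γ') := by
  by_contra hc
  push_neg at hc
  obtain ⟨h1, h2⟩ := hc
  apply h
  unfold coefZD
  rw [Finsupp.sum, Finset.sum_eq_zero, if_neg h2, mul_zero, add_zero]
  rintro (⟨l, k⟩ | n) _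
  · show (γ (Sum.inl (l, k)) : ℝ) * ((k n' : ℝ) + 1) *
        (if β + Finsupp.single (Sum.inl (l, k)) 1 =
            γ + Finsupp.single (Sum.inl (l, k + Finsupp.single n' 1)) 1 + γ'
         then (1:ℝ) else 0) = 0
    rw [if_neg (h1 l k), mul_zero]
  · rfl

lemma ordPrec_lt_of_coefZD {s : Fin d → ℝ} (hs : ∀ i, 1 ≤ s i)
    {lam1 lam2 lam3 : ℝ} (h1 : 0 < lam1) (h2 : 0 < lam2) (h3 : 0 < lam3)
    {γ' : MCoord Lm d} {n' : Nd d} {β γ : MCoord Lm d}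
    (hne : coefZD γ' n' β γ ≠ 0)
    (hkey : lam2 * (nh γ' : ℝ) + lam1 * (mlen γ' : ℝ) + lam3 * polydeg s γ' >
      max 0 (lam1 + lam3 * snorm s n')) :
    ordPrec s lam1 lam2 lam3 γ < ordPrec s lam1 lam2 lam3 β := by
  rcases coefZD_cases hne with ⟨l, k, heq⟩ | heq
  · have hm := congrArg mlen heq
    have hn := congrArg nh heq
    have hp := congrArg (polydeg s) heq
    rw [mlen_add, mlen_add, mlen_add, mlen_single, mlen_single] at hm
    rw [nh_add, nh_add, nh_add, nh_single_inl, nh_single_inl] at hn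
    rw [polydeg_add, polydeg_add, polydeg_add, polydeg_single_inl,
      polydeg_single_inl] at hp
    unfold ordPrec
    have hm' : (mlen β : ℝ) = mlen γ + mlen γ' := by
      have : mlen β = mlen γ + mlen γ' := by omega
      exact_mod_cast this
    have hn' : (nh β : ℝ) = nh γ + nh γ' := by
      have : nh β = nh γ + nh γ' := by omega
      exact_mod_cast this
    have hkey' := le_max_left (0:ℝ) (lam1 + lam3 * snorm s n')
    nlinarith [hkey, hkey']
  · have hm := congrArg mlen heq
    have hn := congrArg nh heq
    have hp := congrArg (polydeg s) heq
    rw [mlen_add, mlen_add, mlen_single] at hm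
    rw [nh_add, nh_add, nh_single_inr] at hn
    rw [polydeg_add, polydeg_add, polydeg_single_inr] at hp
    unfold ordPrec
    have hm' : (mlen β : ℝ) + 1 = mlen γ + mlen γ' := by
      have : mlen β + 1 = mlen γ + mlen γ' := by omega
      exact_mod_cast this
    have hn' : (nh β : ℝ) = nh γ + nh γ' := by
      have : nh β = nh γ + nh γ' := by omega
      exact_mod_cast this
    have hkey' := le_max_right (0:ℝ) (lam1 + lam3 * snorm s n')
    nlinarith [hkey, hkey']

theorem stmt16 {Lm : Type} [Fintype Lm] {d : ℕ} (hd : 1 ≤ d)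
    (s : Fin d → ℝ) (hs : ∀ i, 1 ≤ s i) (η : ℝ) (hη : 0 < η)
    (lam1 lam2 lam3 : ℝ) (h1 : 0 < lam1) (h2 : 0 < lam2) (h3 : 0 < lam3)
    (h23 : lam3 * η ≤ lam2) (β γ : MCoord Lm d) :
    (∀ (γ' : MCoord Lm d) (n' : Nd d), 1 ≤ nh γ' → snorm s n' < η →
      coefZD γ' n' β γ ≠ 0 →
      ordPrec s lam1 lam2 lam3 γ < ordPrec s lam1 lam2 lam3 β) ∧
    (∀ i : Fin d, coefPartial i β γ ≠ 0 →
      ordPrec s lam1 lam2 lam3 γ < ordPrec s lam1 lam2 lam3 β) := by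
  constructor
  · intro γ' n' hnh hsn hne
    apply ordPrec_lt_of_coefZD hs h1 h2 h3 hne
    have hnh' : (1 : ℝ) ≤ (nh γ' : ℝ) := by exact_mod_cast hnh
    have hml : (nh γ' : ℝ) ≤ (mlen γ' : ℝ) := by exact_mod_cast nh_le_mlen γ'
    have hpd := polydeg_nonneg hs γ'
    have hsn0 := snorm_nonneg hs n'
    rw [gt_iff_lt, max_lt_iff]
    constructor
    · nlinarith
    · nlinarith
  · intro i hne
    have hex : ∃ n : Nd d,
        coefZD (Finsupp.single (Sum.inr (n + unitNd i)) 1) n β γ ≠ 0 := by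
      by_contra hc
      push_neg at hc
      apply hne
      unfold coefPartial
      apply finsum_eq_zero_of_forall_eq_zero
      intro n
      rw [hc n, mul_zero]
    obtain ⟨n, hne'⟩ := hex
    apply ordPrec_lt_of_coefZD hs h1 h2 h3 hne'
    rw [nh_single_inr, mlen_single, polydeg_single_inr, snorm_add, snorm_unit]
    have hsi := hs i
    have hsn0 := snorm_nonneg hs n
    push_cast
    rw [gt_iff_lt, max_lt_iff]
    constructor
    · nlinarith
    · nlinarith


end
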